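/- Let N ∈ ℕ and ε, A, A_1, …, A_N ∈ ℝ with A ≠ 0. Let a : ℝ → ℝ be twice differentiable with a(t) > 0 for all t, let φ be differentiable, and let G, G_1, …, G_N : ℝ → ℝ satisfy H'(t) + εφ'(t)² = G(t)/a(t)^A + Σ_{i=1}^N G_i(t)/a(t)^{A_i} for all t, where H = a'/a. Let θ > 0, let σ satisfy σ'(t) = (1/θ) a(t)^{−A/2} for all t, and let g be a differentiable inverse of σ (g(σ(t)) = t for all t). Define u(s) = a(g(s))^{−A/2}, ψ(s) = φ(g(s)), P(s) = (εA/2)ψ'(s)², E(s) = (θ²A/2) G(g(s)), F_i(s) = −(θ²A/2) G_i(g(s)), and C_i = 1 − 2A_i/A. Then for every t ∈ ℝ, at s = σ(t) the function u is twice differentiable and satisfies the Schrödinger-type equation u''(s) + [E(s) − P(s)]u(s) = Σ_{i=1}^N F_i(s)/u(s)^{C_i}. -/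

import Mathlib

/-- corollary (A ≠ 0, δ = 0), forward direction. -/
theorem stmt_6
    (N : ℕ) (ε A : ℝ) (Ai : Fin N → ℝ) (hA : A ≠ 0)
    (a φ G : ℝ → ℝ) (Gi : Fin N → ℝ → ℝ)
    (ha : Differentiable ℝ a) (ha' : Differentiable ℝ (deriv a))
    (hapos : ∀ t, 0 < a t)
    (hφ : Differentiable ℝ φ)
    (hSF : ∀ t, deriv (fun t => deriv a t / a t) t + ε * (deriv φ t) ^ 2
        = G t / a t ^ A + ∑ i, Gi i t / a t ^ Ai i)
    (θ : ℝ) (hθ : 0 < θ)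
    (σ g : ℝ → ℝ)
    (hσ : ∀ t, deriv σ t = (1 / θ) * a t ^ (-A / 2))
    (hg : Differentiable ℝ g) (hgσ : ∀ t, g (σ t) = t)
    (u ψ P E : ℝ → ℝ) (F : Fin N → ℝ → ℝ) (C : Fin N → ℝ)
    (hu : ∀ s, u s = a (g s) ^ (-A / 2))
    (hψ : ∀ s, ψ s = φ (g s))
    (hP : ∀ s, P s = (ε * A / 2) * (deriv ψ s) ^ 2)
    (hE : ∀ s, E s = (θ ^ 2 * A / 2) * G (g s))
    (hF : ∀ i s, F i s = -(θ ^ 2 * A / 2) * Gi i (g s))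
    (hC : ∀ i, C i = 1 - 2 * Ai i / A) :
    ∀ t, DifferentiableAt ℝ u (σ t) ∧ DifferentiableAt ℝ (deriv u) (σ t) ∧
      deriv (deriv u) (σ t) + (E (σ t) - P (σ t)) * u (σ t)
        = ∑ i, F i (σ t) / u (σ t) ^ C i := by
  have huf : u = fun s => a (g s) ^ (-A / 2) := funext hu
  subst huf
  have hψf : ψ = fun s => φ (g s) := funext hψ
  subst hψf
  -- σ differentiable, strictly monotone
  have hσd : ∀ r, DifferentiableAt ℝ σ r := by
    intro r
    apply differentiableAt_of_deriv_ne_zero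
    rw [hσ r]
    exact (mul_pos (by positivity) (Real.rpow_pos_of_pos (hapos r) _)).ne'
  have hmono : StrictMono σ := by
    apply strictMono_of_deriv_pos
    intro r
    rw [hσ r]
    exact mul_pos (by positivity) (Real.rpow_pos_of_pos (hapos r) _)
  -- derivative of g along range σ
  have hgd : ∀ r, deriv g (σ r) = θ * a r ^ (A / 2) := by
    intro r
    have h1 : deriv (g ∘ σ) r = 1 := by
      have hid : g ∘ σ = id := funext hgσ
      rw [hid, deriv_id]
    rw [deriv_comp r (hg _) (hσd r), hσ r] at h1
    have h2 : a r ^ (-A / 2) * a r ^ (A / 2) = 1 := by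
      rw [← Real.rpow_add (hapos r)]
      norm_num [show -A / 2 + A / 2 = 0 by ring]
    field_simp at h1
    rw [neg_div] at h2
    linear_combination a r ^ (A / 2) * h1 - deriv g (σ r) * h2
  have hagd : ∀ s, DifferentiableAt ℝ (fun s => a (g s)) s := fun s => (ha _).comp s (hg s)
  have hud : ∀ s, DifferentiableAt ℝ (fun s => a (g s) ^ (-A / 2)) s := by
    intro s
    exact (hagd s).rpow_const (Or.inl (hapos _).ne')
  -- derivative of u along range σ
  have hderivu : ∀ r, deriv (fun s => a (g s) ^ (-A / 2)) (σ r)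
      = -(A * θ / 2) * (deriv a r / a r) := by
    intro r
    rw [deriv_rpow_const (hagd _) (Or.inl (by rw [hgσ]; exact (hapos r).ne'))]
    have hcomp : deriv (fun s => a (g s)) (σ r) = deriv a r * (θ * a r ^ (A / 2)) := by
      rw [show (fun s => a (g s)) = a ∘ g from rfl, deriv_comp _ (ha _) (hg _), hgσ, hgd]
    rw [hcomp, hgσ]
    have key : a r ^ (A / 2) * a r ^ (-A / 2 - 1) = (a r)⁻¹ := by
      rw [← Real.rpow_add (hapos r), show A / 2 + (-A / 2 - 1) = -1 by ring,
        Real.rpow_neg_one]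
    linear_combination (deriv a r * θ * (-A / 2)) * key
  intro t
  -- neighborhood of σ t inside range σ
  have hmem : Set.Ioo (σ (t - 1)) (σ (t + 1)) ∈ nhds (σ t) :=
    Ioo_mem_nhds (hmono (by linarith)) (hmono (by linarith))
  have hcont : ContinuousOn σ (Set.Icc (t - 1) (t + 1)) :=
    fun r _ => (hσd r).continuousAt.continuousWithinAt
  have hsub : Set.Ioo (σ (t - 1)) (σ (t + 1)) ⊆ σ '' Set.Ioo (t - 1) (t + 1) :=
    intermediate_value_Ioo (by linarith) hcont
  set w : ℝ → ℝ := fun s => -(A * θ / 2) * (deriv a (g s) / a (g s)) with hw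
  have heq : deriv (fun s => a (g s) ^ (-A / 2)) =ᶠ[nhds (σ t)] w := by
    filter_upwards [hmem] with s hs
    obtain ⟨r, -, hr⟩ := hsub hs
    rw [← hr, hderivu r, hw]
    simp only [hgσ]
  -- differentiability of w
  have hH' : DifferentiableAt ℝ (fun x => deriv a x / a x) (g (σ t)) := by
    rw [hgσ]
    exact (ha' t).div (ha t) (hapos t).ne'
  have hHgd : DifferentiableAt ℝ (fun s => deriv a (g s) / a (g s)) (σ t) :=
    hH'.comp (σ t) (hg _)
  have hwd : DifferentiableAt ℝ w (σ t) := hHgd.const_mul _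
  have hdud : DifferentiableAt ℝ (deriv (fun s => a (g s) ^ (-A / 2))) (σ t) :=
    (heq.differentiableAt_iff).mpr hwd
  refine ⟨hud _, hdud, ?_⟩
  -- second derivative
  have hdw : deriv w (σ t)
      = -(A * θ / 2) * (deriv (fun x => deriv a x / a x) t * (θ * a t ^ (A / 2))) := by
    rw [hw]
    rw [deriv_const_mul _ hHgd]
    congr 1
    rw [show (fun s => deriv a (g s) / a (g s)) = (fun x => deriv a x / a x) ∘ g from rfl,
      deriv_comp _ hH' (hg _), hgσ, hgd]
  have hdd : deriv (deriv (fun s => a (g s) ^ (-A / 2))) (σ t) = deriv w (σ t) :=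
    heq.deriv_eq
  -- derivative of ψ
  have hdψ : deriv (fun s => φ (g s)) (σ t) = deriv φ t * (θ * a t ^ (A / 2)) := by
    rw [show (fun s => φ (g s)) = φ ∘ g from rfl, deriv_comp _ (hφ _) (hg _), hgσ, hgd]
  rw [hdd, hdw, hP, hE, hdψ]
  simp only [hgσ]
  -- sum side
  have hpow : ∀ i : Fin N,
      ((a t ^ (-A / 2) : ℝ)) ^ C i = a t ^ Ai i * a t ^ (-A / 2) := by
    intro i
    rw [hC i, ← Real.rpow_mul (hapos t).le, ← Real.rpow_add (hapos t)]
    congr 1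
    field_simp
    ring
  have hX0 : (a t ^ A : ℝ) ≠ 0 := (Real.rpow_pos_of_pos (hapos t) _).ne'
  have hY0 : (a t ^ (-A / 2) : ℝ) ≠ 0 := (Real.rpow_pos_of_pos (hapos t) _).ne'
  have hXY : a t ^ A * a t ^ (-A / 2) * a t ^ (-A / 2) = 1 := by
    rw [← Real.rpow_add (hapos t), ← Real.rpow_add (hapos t),
      show A + -A / 2 + -A / 2 = 0 by ring, Real.rpow_zero]
  have hZ : a t ^ (A / 2) = a t ^ A * a t ^ (-A / 2) := by
    rw [← Real.rpow_add (hapos t)]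
    congr 1
    ring
  simp only [hF, hgσ, hpow]
  have hsum : ∑ i : Fin N, -(θ ^ 2 * A / 2) * Gi i t / (a t ^ Ai i * a t ^ (-A / 2))
      = (-(θ ^ 2 * A / 2) * (a t ^ A * a t ^ (-A / 2))) * ∑ i : Fin N, Gi i t / a t ^ Ai i := by
    rw [Finset.mul_sum]
    refine Finset.sum_congr rfl fun i _ => ?_
    have hW0 : (a t ^ Ai i : ℝ) ≠ 0 := (Real.rpow_pos_of_pos (hapos t) _).ne'
    rw [eq_inv_of_mul_eq_one_left hXY]
    ring
  rw [hsum]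
  have hGt : G t = (deriv (fun x => deriv a x / a x) t + ε * (deriv φ t) ^ 2
      - ∑ i : Fin N, Gi i t / a t ^ Ai i) * a t ^ A := by
    have h := hSF t
    field_simp at h
    linarith [h]
  rw [hGt, hZ]
  linear_combination (-(θ ^ 2 * A * ε / 2) * (deriv φ t) ^ 2 * (a t ^ A) * (a t ^ (-A / 2))) * hXY
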